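/- For all integers j, ℓ ≥ 1, the identity ∑_{p=0}^{∞} ∑_{r=0}^{p} (-1)^r C(p,r) s(ℓr, ℓr - j) = S(ℓ+j, ℓ) holds, where s denotes unsigned Stirling numbers of the first kind and S denotes Stirling numbers of the second kind; all but finitely many terms of the outer sum are zero. -/

import Mathlib

/-- Unsigned Stirling numbers of the first kind. -/
def stirling1 : ℕ → ℕ → ℕ
  | 0, 0 => 1
  | 0, _+1 => 0
  | _+1, 0 => 0
  | n+1, k+1 => stirling1 n k + n * stirling1 n (k+1)

/-- Stirling numbers of the second kind. -/
def stirling2 : ℕ → ℕ → ℕ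
  | 0, 0 => 1
  | 0, _+1 => 0
  | _+1, 0 => 0
  | n+1, k+1 => stirling2 n k + (k+1) * stirling2 n (k+1)

/-- `s(n, n-j)` with the convention that it is `0` when `n - j < 0`. -/
def stirling1Shift (n j : ℕ) : ℤ :=
  if j ≤ n then (stirling1 n (n - j) : ℤ) else 0

open Polynomial Finset

def stirling2Shift (m j : ℕ) : ℤ :=
  if j ≤ m then (stirling2 m (m - j) : ℤ) else 0

lemma stirling1_eq_zero {n k : ℕ} (h : n < k) : stirling1 n k = 0 := by
  induction n generalizing k with
  | zero => obtain ⟨k, rfl⟩ := Nat.exists_eq_add_of_lt h; rfl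
  | succ n ih =>
    obtain ⟨k, rfl⟩ : ∃ m, k = m + 1 := ⟨k - 1, by omega⟩
    show stirling1 n k + n * stirling1 n (k+1) = 0
    rw [ih (by omega), ih (by omega)]; ring

lemma stirling2_eq_zero {n k : ℕ} (h : n < k) : stirling2 n k = 0 := by
  induction n generalizing k with
  | zero => obtain ⟨k, rfl⟩ := Nat.exists_eq_add_of_lt h; rfl
  | succ n ih =>
    obtain ⟨k, rfl⟩ : ∃ m, k = m + 1 := ⟨k - 1, by omega⟩
    show stirling2 n k + (k+1) * stirling2 n (k+1) = 0
    rw [ih (by omega), ih (by omega)]; ring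

lemma stirling1_self (n : ℕ) : stirling1 n n = 1 := by
  induction n with
  | zero => rfl
  | succ n ih =>
    show stirling1 n n + n * stirling1 n (n+1) = 1
    rw [ih, stirling1_eq_zero (by omega)]; ring

lemma stirling2_self (n : ℕ) : stirling2 n n = 1 := by
  induction n with
  | zero => rfl
  | succ n ih =>
    show stirling2 n n + (n+1) * stirling2 n (n+1) = 1
    rw [ih, stirling2_eq_zero (by omega)]; ring

lemma stirling1_zero (n : ℕ) : stirling1 (n+1) 0 = 0 := rfl
lemma stirling2_zero (n : ℕ) : stirling2 (n+1) 0 = 0 := rfl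

lemma stirling1Shift_rec (n j : ℕ) :
    stirling1Shift (n+1) (j+1) = stirling1Shift n (j+1) + n * stirling1Shift n j := by
  unfold stirling1Shift
  rcases lt_trichotomy n j with h | rfl | h
  · rw [if_neg (by omega), if_neg (by omega), if_neg (by omega)]; ring
  · rw [if_pos (by omega), if_neg (by omega)]
    have : n + 1 - (n + 1) = 0 := by omega
    rw [this]
    rcases Nat.eq_zero_or_pos n with rfl | hn
    · simp [stirling1_zero 0]
    · rw [stirling1_zero, if_pos le_rfl, Nat.sub_self]
      cases n with
      | zero => omega
      | succ m => rw [stirling1_zero]; simp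
  · rw [if_pos (by omega), if_pos (by omega), if_pos (by omega)]
    have h1 : n + 1 - (j + 1) = (n - j - 1) + 1 := by omega
    have h2 : n - (j+1) = n - j - 1 := by omega
    have h3 : n - j = (n - j - 1) + 1 := by omega
    rw [h1, h2]
    show ((stirling1 n (n-j-1) + n * stirling1 n (n-j-1+1) : ℕ) : ℤ) = _
    rw [← h3]
    push_cast; ring

lemma stirling2Shift_rec (m j : ℕ) :
    stirling2Shift (m+1) (j+1) = stirling2Shift m (j+1) + ((m : ℤ) - j) * stirling2Shift m j := by
  unfold stirling2Shift
  rcases lt_trichotomy m j with h | rfl | h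
  · rw [if_neg (by omega), if_neg (by omega), if_neg (by omega)]; ring
  · rw [if_pos (by omega), if_neg (by omega), if_pos le_rfl]
    have : m + 1 - (m + 1) = 0 := by omega
    rw [this, Nat.sub_self]
    cases m with
    | zero => simp [stirling2_zero 0]
    | succ k => rw [stirling2_zero]; push_cast; ring
  · rw [if_pos (by omega), if_pos (by omega), if_pos (by omega)]
    have h1 : m + 1 - (j + 1) = (m - j - 1) + 1 := by omega
    have h2 : m - (j+1) = m - j - 1 := by omega
    have h3 : m - j = (m - j - 1) + 1 := by omega
    rw [h1, h2]
    show ((stirling2 m (m-j-1) + (m-j-1+1) * stirling2 m (m-j-1+1) : ℕ) : ℤ) = _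
    rw [← h3]
    have h4 : ((m - j : ℕ) : ℤ) = (m : ℤ) - j := by omega
    push_cast [h4]; ring

open Polynomial Finset

noncomputable def del (f : ℚ[X]) : ℚ[X] := f.comp (X + 1) - f

lemma del_add (f g : ℚ[X]) : del (f + g) = del f + del g := by
  unfold del; rw [add_comp]; ring

lemma natDegree_del_le (f : ℚ[X]) (d : ℕ) (h : f.natDegree ≤ d + 1) :
    (del f).natDegree ≤ d := by
  have hpow : ∀ i : ℕ, i ≤ d + 1 → (((X:ℚ[X]) + 1)^i - X^i).natDegree ≤ d := by
    intro i hi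
    have : (((X:ℚ[X]) + 1)^i - X^i).natDegree ≤ i - 1 := by
      rw [Polynomial.natDegree_le_iff_coeff_eq_zero]
      intro N hN
      rw [Polynomial.coeff_sub, Polynomial.coeff_X_add_one_pow, Polynomial.coeff_X_pow]
      rcases eq_or_ne N i with rfl | hne
      · simp
      · rw [Nat.choose_eq_zero_of_lt (by omega), if_neg hne]
        simp
    omega
  conv_lhs => rw [f.as_sum_range' (d+2) (by omega)]
  unfold del
  rw [Polynomial.sum_comp, ← Finset.sum_sub_distrib]
  refine (Polynomial.natDegree_sum_le _ _).trans ?_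
  rw [Finset.fold_max_le]
  refine ⟨by omega, fun i hi => ?_⟩
  simp only [Function.comp_apply]
  rw [Polynomial.monomial_comp]
  have : (monomial i (f.coeff i) : ℚ[X]) = C (f.coeff i) * X ^ i := by
    rw [Polynomial.C_mul_X_pow_eq_monomial]
  rw [this, ← mul_sub]
  refine (Polynomial.natDegree_mul_le).trans ?_
  simp only [Polynomial.natDegree_C, zero_add]
  exact hpow i (by simpa using Nat.lt_succ_iff.mp (Finset.mem_range.mp hi))

noncomputable def asum (p : ℕ) (f : ℚ[X]) : ℚ :=
  ∑ r ∈ Finset.range (p + 1), (-1 : ℚ) ^ r * (p.choose r) * f.eval (r : ℚ)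

lemma asum_zero (f : ℚ[X]) : asum 0 f = f.eval 0 := by
  simp [asum]

lemma del_eval (f : ℚ[X]) (x : ℚ) : (del f).eval x = f.eval (x + 1) - f.eval x := by
  simp [del, eval_comp]

lemma asum_succ (p : ℕ) (f : ℚ[X]) : asum (p + 1) f = - asum p (del f) := by
  have key : asum p (del f) =
      (∑ r ∈ Finset.range (p + 1), (-1 : ℚ) ^ r * (p.choose r) * f.eval ((r : ℚ) + 1))
      - (∑ r ∈ Finset.range (p + 1), (-1 : ℚ) ^ r * (p.choose r) * f.eval (r : ℚ)) := by
    unfold asum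
    rw [← Finset.sum_sub_distrib]
    refine Finset.sum_congr rfl fun r _ => ?_
    rw [del_eval]; ring
  rw [key]
  unfold asum
  rw [Finset.sum_range_succ']
  have hsplit : ∀ i ∈ Finset.range (p+1),
      (-1 : ℚ) ^ (i+1) * (((p+1).choose (i+1) : ℕ) : ℚ) * f.eval (((i+1 : ℕ) : ℚ)) =
      -((-1:ℚ)^i * (p.choose i) * f.eval ((i:ℚ)+1))
        + (-1:ℚ)^(i+1) * (p.choose (i+1)) * f.eval ((i:ℚ)+1) := by
    intro i _
    rw [Nat.choose_succ_succ]
    push_cast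
    ring
  rw [Finset.sum_congr rfl hsplit, Finset.sum_add_distrib]
  have h1 : ∑ i ∈ Finset.range (p+1), -((-1:ℚ)^i * (p.choose i) * f.eval ((i:ℚ)+1))
      = - ∑ r ∈ Finset.range (p+1), (-1:ℚ)^r * (p.choose r) * f.eval ((r:ℚ)+1) :=
    Finset.sum_neg_distrib _
  have h2 : (∑ i ∈ Finset.range (p+1), (-1:ℚ)^(i+1) * (p.choose (i+1)) * f.eval ((i:ℚ)+1))
      + (-1:ℚ)^0 * (((p+1).choose 0 : ℕ) : ℚ) * f.eval (((0:ℕ):ℚ))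
      = ∑ r ∈ Finset.range (p+1), (-1:ℚ)^r * (p.choose r) * f.eval (r:ℚ) := by
    rw [Finset.sum_range_succ]
    conv_rhs => rw [Finset.sum_range_succ']
    rw [Nat.choose_succ_self]
    push_cast
    ring_nf
    simp
  rw [h1]
  linarith [h2]

lemma asum_sub (p : ℕ) (f g : ℚ[X]) : asum p (f - g) = asum p f - asum p g := by
  unfold asum
  rw [← Finset.sum_sub_distrib]
  exact Finset.sum_congr rfl fun r _ => by rw [eval_sub]; ring

lemma asum_C (p : ℕ) (c : ℚ) (hp : 1 ≤ p) : asum p (C c) = 0 := by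
  unfold asum
  have : ∀ r ∈ Finset.range (p+1), (-1:ℚ)^r * (p.choose r) * (C c).eval (r:ℚ)
      = (((-1:ℤ)^r * (p.choose r) : ℤ) : ℚ) * c := by
    intro r _; rw [eval_C]; push_cast; ring
  rw [Finset.sum_congr rfl this, ← Finset.sum_mul, ← Int.cast_sum,
    Int.alternating_sum_range_choose_of_ne (by omega)]
  simp

lemma asum_eq_zero : ∀ d : ℕ, ∀ f : ℚ[X], ∀ p : ℕ, f.natDegree ≤ d → d < p → asum p f = 0 := by
  intro d
  induction d with
  | zero =>
    intro f p hf hp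
    obtain ⟨c, rfl⟩ := Polynomial.natDegree_eq_zero.mp (Nat.le_zero.mp hf)
    exact asum_C p c hp
  | succ d ih =>
    intro f p hf hp
    obtain ⟨q, rfl⟩ : ∃ q, p = q + 1 := ⟨p - 1, by omega⟩
    rw [asum_succ, ih (del f) q (natDegree_del_le f d hf) (by omega), neg_zero]

lemma sum_asum : ∀ d : ℕ, ∀ f : ℚ[X], f.natDegree ≤ d →
    ∑ p ∈ Finset.range (d + 1), asum p f = f.eval (-1) := by
  intro d
  induction d with
  | zero =>
    intro f hf
    obtain ⟨c, rfl⟩ := Polynomial.natDegree_eq_zero.mp (Nat.le_zero.mp hf)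
    simp [asum_zero]
  | succ d ih =>
    intro f hf
    rw [Finset.sum_range_succ']
    have : ∀ i ∈ Finset.range (d+1), asum (i+1) f = - asum i (del f) :=
      fun i _ => asum_succ i f
    rw [Finset.sum_congr rfl this, Finset.sum_neg_distrib,
      ih (del f) (natDegree_del_le f d hf), asum_zero, del_eval]
    ring_nf

lemma exists_antideriv : ∀ d : ℕ, ∀ g : ℚ[X], g.natDegree ≤ d →
    ∃ G : ℚ[X], del G = g ∧ G.eval 0 = 0 ∧ G.natDegree ≤ d + 1 := by
  intro d
  induction d with
  | zero =>
    intro g hg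
    obtain ⟨c, rfl⟩ := Polynomial.natDegree_eq_zero.mp (Nat.le_zero.mp hg)
    refine ⟨C c * X, ?_, by simp, ?_⟩
    · unfold del
      rw [mul_comp, C_comp, X_comp]
      ring
    · exact (Polynomial.natDegree_C_mul_le c X).trans (by simp)
  | succ d ih =>
    intro g hg
    set a : ℚ := g.coeff (d+1) / (d+2) with ha
    set G₀ : ℚ[X] := C a * X^(d+2) with hG₀
    have hG₀deg : G₀.natDegree ≤ d + 2 :=
      (Polynomial.natDegree_C_mul_le a _).trans (by simp)
    have hdelG₀ : del G₀ = C a * ((X+1)^(d+2) - X^(d+2)) := by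
      unfold del
      rw [hG₀, mul_comp, C_comp, pow_comp, X_comp]
      ring
    have hdeldeg : (del G₀).natDegree ≤ d + 1 := natDegree_del_le G₀ (d+1) hG₀deg
    have hcoeff : (del G₀).coeff (d+1) = g.coeff (d+1) := by
      rw [hdelG₀, Polynomial.coeff_C_mul, Polynomial.coeff_sub,
        Polynomial.coeff_X_add_one_pow, Polynomial.coeff_X_pow,
        if_neg (by omega)]
      rw [ha]
      have : ((d+2).choose (d+1) : ℚ) = (d+2 : ℚ) := by
        rw [Nat.choose_succ_self_right]
        push_cast; ring
      rw [this]
      field_simp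
      simp
    have hh : (g - del G₀).natDegree ≤ d := by
      rw [Polynomial.natDegree_le_iff_coeff_eq_zero]
      intro N hN
      rw [Polynomial.coeff_sub]
      rcases eq_or_lt_of_le (Nat.succ_le_of_lt hN) with h | h
      · rw [← h, hcoeff, sub_self]
      · rw [Polynomial.coeff_eq_zero_of_natDegree_lt (by omega),
          Polynomial.coeff_eq_zero_of_natDegree_lt (by omega), sub_self]
    obtain ⟨G₁, hd1, he1, hdeg1⟩ := ih (g - del G₀) hh
    refine ⟨G₀ + G₁, ?_, ?_, ?_⟩
    · rw [show del (G₀ + G₁) = del G₀ + del G₁ from by unfold del; rw [add_comp]; ring, hd1]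
      ring
    · rw [Polynomial.eval_add, he1, hG₀]
      simp
    · exact (Polynomial.natDegree_add_le _ _).trans (by omega)

lemma exists_P : ∀ j : ℕ, ∃ P : ℚ[X], P.natDegree ≤ 2*j ∧
    (∀ n : ℕ, P.eval (n:ℚ) = (stirling1Shift n j : ℚ)) ∧
    (∀ m : ℕ, P.eval ((j:ℚ) - m) = (stirling2Shift m j : ℚ)) := by
  intro j
  induction j with
  | zero =>
    refine ⟨1, by simp, fun n => ?_, fun m => ?_⟩
    · rw [stirling1Shift, if_pos (Nat.zero_le n), Nat.sub_zero, stirling1_self]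
      simp
    · rw [stirling2Shift, if_pos (Nat.zero_le m), Nat.sub_zero, stirling2_self]
      simp
  | succ j ih =>
    obtain ⟨P, hdeg, h1, h2⟩ := ih
    have hgdeg : (X * P).natDegree ≤ 2*j + 1 := by
      refine (Polynomial.natDegree_mul_le).trans ?_
      rw [Polynomial.natDegree_X]
      omega
    obtain ⟨G, hdel, hev0, hGdeg⟩ := exists_antideriv (2*j+1) (X * P) hgdeg
    have hstep : ∀ x : ℚ, G.eval (x + 1) - G.eval x = x * P.eval x := by
      intro x
      rw [← del_eval, hdel, Polynomial.eval_mul, Polynomial.eval_X]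
    have A1 : ∀ n : ℕ, G.eval (n : ℚ) = (stirling1Shift n (j+1) : ℚ) := by
      intro n
      induction n with
      | zero =>
        rw [stirling1Shift, if_neg (by omega)]
        simpa using hev0
      | succ n ihn =>
        have := hstep (n : ℚ)
        have hrec := stirling1Shift_rec n j
        push_cast [hrec]
        push_cast at ihn this ⊢
        rw [h1 n] at this
        linarith
    refine ⟨G, by omega, A1, ?_⟩
    intro m
    induction m with
    | zero =>
      have := A1 (j+1)
      rw [stirling1Shift, if_pos le_rfl, Nat.sub_self] at this
      rw [stirling2Shift, if_neg (by omega)]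
      cases j with
      | zero => push_cast at this ⊢; simpa [stirling1_zero 0] using this
      | succ k =>
        rw [stirling1_zero] at this
        push_cast at this ⊢
        simpa using this
    | succ m ihm =>
      have hx : ((j:ℚ) + 1) - (m+1 : ℕ) = (j:ℚ) - m := by push_cast; ring
      have hx1 : ((j:ℚ) + 1) - (m : ℕ) = ((j:ℚ) - m) + 1 := by push_cast; ring
      have := hstep ((j:ℚ) - m)
      have hrec := stirling2Shift_rec m j
      have ihm' : G.eval (((j:ℚ) - m) + 1) = (stirling2Shift m (j+1) : ℚ) := by
        rw [← hx1]
        push_cast at ihm ⊢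
        convert ihm using 2
      push_cast [hrec]
      push_cast at this ihm' ⊢
      rw [h2 m] at this
      have goal_eq : G.eval ((j:ℚ) + 1 - ((m:ℚ)+1)) = G.eval ((j:ℚ) - m) := by
        norm_num
      rw [goal_eq]
      linarith

/-- For `j, ℓ ≥ 1`,
`∑_{p≥0} ∑_{r=0}^p (-1)^r C(p,r) s(ℓr, ℓr-j) = S(ℓ+j, ℓ)`, where all but finitely many
outer summands vanish; here `s` (resp. `S`) is the unsigned Stirling number of the first
(resp. second) kind. -/
theorem altBinomSum_stirling1_eq_stirling2 (j ℓ : ℕ) (hj : 1 ≤ j) (hℓ : 1 ≤ ℓ) :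
    (Function.support (fun p : ℕ =>
        ∑ r ∈ Finset.range (p + 1),
          (-1 : ℤ) ^ r * (p.choose r) * stirling1Shift (ℓ * r) j)).Finite ∧
      ∑ᶠ p : ℕ, (∑ r ∈ Finset.range (p + 1),
          (-1 : ℤ) ^ r * (p.choose r) * stirling1Shift (ℓ * r) j) =
        (stirling2 (ℓ + j) ℓ : ℤ) := by
  obtain ⟨P, hdeg, h1, h2⟩ := exists_P j
  set f : ℚ[X] := P.comp (C (ℓ:ℚ) * X) with hf
  have hfdeg : f.natDegree ≤ 2*j := by
    refine (Polynomial.natDegree_comp_le).trans ?_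
    have : (C (ℓ:ℚ) * X).natDegree ≤ 1 := (Polynomial.natDegree_C_mul_le _ _).trans (by simp)
    calc P.natDegree * (C (ℓ:ℚ) * X).natDegree ≤ 2*j * 1 :=
          Nat.mul_le_mul hdeg this
      _ = 2*j := by ring
  have hfeval : ∀ r : ℕ, f.eval (r : ℚ) = (stirling1Shift (ℓ * r) j : ℚ) := by
    intro r
    rw [hf, Polynomial.eval_comp, Polynomial.eval_mul, Polynomial.eval_C, Polynomial.eval_X]
    rw [show ((ℓ:ℚ) * r) = ((ℓ * r : ℕ) : ℚ) by push_cast; ring]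
    exact h1 (ℓ * r)
  set g : ℕ → ℤ := fun p => ∑ r ∈ Finset.range (p + 1),
      (-1 : ℤ) ^ r * (p.choose r) * stirling1Shift (ℓ * r) j with hg
  have hcast : ∀ p, (g p : ℚ) = asum p f := by
    intro p
    rw [hg]
    push_cast
    refine Finset.sum_congr rfl fun r _ => ?_
    rw [hfeval r]
  have hzero : ∀ p, 2*j < p → g p = 0 := by
    intro p hp
    have := asum_eq_zero (2*j) f p hfdeg hp
    rw [← hcast] at this
    exact_mod_cast this
  have hsupp : Function.support g ⊆ (Finset.range (2*j+1) : Set ℕ) := by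
    intro p hp
    simp only [Finset.coe_range, Set.mem_Iio]
    by_contra h
    exact hp (hzero p (by omega))
  refine ⟨Set.Finite.subset (Finset.range (2*j+1)).finite_toSet hsupp, ?_⟩
  rw [finsum_eq_sum_of_support_subset g hsupp]
  have hsum : ((∑ p ∈ Finset.range (2*j+1), g p : ℤ) : ℚ) = f.eval (-1) := by
    push_cast [hcast]
    exact sum_asum (2*j) f hfdeg
  have hval : f.eval (-1) = ((stirling2 (ℓ + j) ℓ : ℤ) : ℚ) := by
    rw [hf, Polynomial.eval_comp, Polynomial.eval_mul, Polynomial.eval_C, Polynomial.eval_X]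
    have : (ℓ:ℚ) * (-1) = (j:ℚ) - ((ℓ + j : ℕ) : ℚ) := by push_cast; ring
    rw [this, h2 (ℓ + j)]
    rw [stirling2Shift, if_pos (by omega), show ℓ + j - j = ℓ by omega]
  exact_mod_cast hsum.trans hval
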